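/- Let (X_i, Y_i), i ≥ 1, be i.i.d. uniform on Ω × [0,1], and let p, q be distributions on Ω. Define I_p = min{i : Y_i < p(X_i)} and I_q = min{i : Y_i < q(X_i)}. Then Pr[I_p = I_q] = (1 − d_TV(p,q))/(1 + d_TV(p,q)). -/

import Mathlib

open MeasureTheory
open scoped ENNReal

/-- The index of the first trial `i ≥ 1` accepted by the rejection-sampling scheme. -/
noncomputable def hitIdx {Ω α : Type*} (p : Ω → ℝ) (Z : ℕ → α → Ω × ℝ) (a : α) : ℕ :=
  sInf {i | 1 ≤ i ∧ (Z i a).2 < p (Z i a).1}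

lemma RS_hit_zero {Ω α : Type*} (c : Ω → ℝ) (Z : ℕ → α → Ω × ℝ) (a : α) :
    hitIdx c Z a = 0 ↔ ∀ j, 1 ≤ j → ¬ (Z j a).2 < c ((Z j a).1) := by
  rw [hitIdx, Nat.sInf_eq_zero]
  constructor
  · rintro (h | h)
    · exact absurd h.1 (by omega)
    · intro j hj hlt
      exact absurd (Set.eq_empty_iff_forall_notMem.mp h j) (by simp [hj, hlt])
  · intro h
    right
    ext j
    simp only [Set.mem_setOf_eq, Set.mem_empty_iff_false, iff_false, not_and]
    exact h j

lemma RS_hit_succ {Ω α : Type*} (c : Ω → ℝ) (Z : ℕ → α → Ω × ℝ) (a : α) (k : ℕ) :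
    hitIdx c Z a = k + 1 ↔
      ((Z (k+1) a).2 < c ((Z (k+1) a).1) ∧
        ∀ j, 1 ≤ j → j ≤ k → ¬ (Z j a).2 < c ((Z j a).1)) := by
  set S := {i | 1 ≤ i ∧ (Z i a).2 < c ((Z i a).1)} with hS
  constructor
  · intro h
    have hne : S.Nonempty := by
      by_contra hemp
      rw [Set.not_nonempty_iff_eq_empty] at hemp
      rw [hitIdx, ← hS, hemp] at h
      simp at h
    have hmem : sInf S ∈ S := Nat.sInf_mem hne
    rw [hitIdx, ← hS] at h
    rw [h] at hmem
    refine ⟨hmem.2, fun j hj hjk hlt => ?_⟩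
    have : j ∉ S := Nat.notMem_of_lt_sInf (by omega)
    exact this ⟨hj, hlt⟩
  · rintro ⟨hacc, hrej⟩
    have hmemS : k + 1 ∈ S := ⟨by omega, hacc⟩
    have hle : sInf S ≤ k + 1 := Nat.sInf_le hmemS
    have hmem : sInf S ∈ S := Nat.sInf_mem ⟨_, hmemS⟩
    rw [hitIdx, ← hS]
    rcases Nat.lt_or_ge (sInf S) (k+1) with hl | hg
    · exact absurd hmem.2 (hrej _ hmem.1 (by omega))
    · omega

instance RS_probIcc : IsProbabilityMeasure (volume.restrict (Set.Icc (0:ℝ) 1)) :=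
  ⟨by rw [Measure.restrict_apply_univ, Real.volume_Icc]; norm_num⟩

lemma RS_meas_S {Ω : Type*} [MeasurableSpace Ω] [Countable Ω] [MeasurableSingletonClass Ω]
    (c : Ω → ℝ) : MeasurableSet {z : Ω × ℝ | z.2 < c z.1} :=
  measurableSet_lt measurable_snd ((measurable_of_countable c).comp measurable_fst)

lemma RS_nu_S {Ω : Type*} [Fintype Ω] [Nonempty Ω] [MeasurableSpace Ω]
    [MeasurableSingletonClass Ω] (c : Ω → ℝ) (h0 : ∀ x, 0 ≤ c x) (h1 : ∀ x, c x ≤ 1) :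
    ((PMF.uniformOfFintype Ω).toMeasure.prod (volume.restrict (Set.Icc (0:ℝ) 1)))
        {z : Ω × ℝ | z.2 < c z.1}
      = ENNReal.ofReal (∑ x, c x) * (Fintype.card Ω : ℝ≥0∞)⁻¹ := by
  rw [Measure.prod_apply (RS_meas_S c)]
  have hpre : ∀ x : Ω, Prod.mk x ⁻¹' {z : Ω × ℝ | z.2 < c z.1} = Set.Iio (c x) := by
    intro x; ext y; simp
  simp only [hpre]
  have hres : ∀ x : Ω, (volume.restrict (Set.Icc (0:ℝ) 1)) (Set.Iio (c x))
      = ENNReal.ofReal (c x) := by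
    intro x
    rw [Measure.restrict_apply measurableSet_Iio]
    have : Set.Iio (c x) ∩ Set.Icc (0:ℝ) 1 = Set.Ico 0 (c x) := by
      ext y
      simp only [Set.mem_inter_iff, Set.mem_Iio, Set.mem_Icc, Set.mem_Ico]
      constructor
      · rintro ⟨h, h2, h3⟩; exact ⟨h2, h⟩
      · rintro ⟨h2, h⟩; exact ⟨h, h2, by linarith [h1 x]⟩
    rw [this, Real.volume_Ico, sub_zero]
  simp only [hres]
  rw [lintegral_fintype]
  simp only [PMF.toMeasure_apply_singleton _ _ (measurableSet_singleton _),
    PMF.uniformOfFintype_apply]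
  rw [← Finset.sum_mul, ← ENNReal.ofReal_sum_of_nonneg (fun x _ => h0 x)]

theorem stmt_7 {Ω : Type*} [Fintype Ω] [Nonempty Ω] [MeasurableSpace Ω]
    [MeasurableSingletonClass Ω]
    {α : Type*} [MeasurableSpace α] (μ : Measure α) [IsProbabilityMeasure μ]
    (p q : Ω → ℝ) (hp0 : ∀ x, 0 ≤ p x) (hp1 : ∑ x, p x = 1)
    (hq0 : ∀ x, 0 ≤ q x) (hq1 : ∑ x, q x = 1)
    (Z : ℕ → α → Ω × ℝ) (hZmeas : ∀ i, Measurable (Z i))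
    (hdist : ∀ i, 1 ≤ i → Measure.map (Z i) μ =
      (PMF.uniformOfFintype Ω).toMeasure.prod (volume.restrict (Set.Icc (0:ℝ) 1)))
    (hindep : ∀ (s : Finset ℕ) (A : ℕ → Set (Ω × ℝ)), (∀ i, MeasurableSet (A i)) →
      μ (⋂ i ∈ s, (Z i) ⁻¹' (A i)) = ∏ i ∈ s, μ ((Z i) ⁻¹' (A i))) :
    μ {a | hitIdx p Z a = hitIdx q Z a}
      = ENNReal.ofReal
          ((1 - (1/2) * ∑ x, |p x - q x|) / (1 + (1/2) * ∑ x, |p x - q x|)) := by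
  classical
  set ν := (PMF.uniformOfFintype Ω).toMeasure.prod (volume.restrict (Set.Icc (0:ℝ) 1)) with hν
  haveI : IsProbabilityMeasure ν := by rw [hν]; infer_instance
  -- bounds
  have hple : ∀ x, p x ≤ 1 := fun x => hp1 ▸ Finset.single_le_sum
    (fun i _ => hp0 i) (Finset.mem_univ x)
  have hqle : ∀ x, q x ≤ 1 := fun x => hq1 ▸ Finset.single_le_sum
    (fun i _ => hq0 i) (Finset.mem_univ x)
  set cmin : Ω → ℝ := fun x => min (p x) (q x) with hcmin
  set cmax : Ω → ℝ := fun x => max (p x) (q x) with hcmax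
  set d : ℝ := ∑ x, |p x - q x| with hd
  have hd0 : 0 ≤ d := Finset.sum_nonneg fun x _ => abs_nonneg _
  set Smin : ℝ := ∑ x, cmin x with hSminDef
  set Smax : ℝ := ∑ x, cmax x with hSmaxDef
  have hsum : Smin + Smax = 2 := by
    rw [hSminDef, hSmaxDef, ← Finset.sum_add_distrib]
    have : ∀ x ∈ Finset.univ, cmin x + cmax x = p x + q x := fun x _ => min_add_max _ _
    rw [Finset.sum_congr rfl this, Finset.sum_add_distrib, hp1, hq1]; norm_num
  have hdiff : Smax - Smin = d := by
    rw [hSmaxDef, hSminDef, ← Finset.sum_sub_distrib, hd]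
    exact Finset.sum_congr rfl fun x _ => (max_sub_min_eq_abs _ _).trans (abs_sub_comm _ _)
  have hSminval : Smin = 1 - (1/2) * d := by linarith
  have hSmaxval : Smax = 1 + (1/2) * d := by linarith
  have hSmaxpos : 0 < Smax := by rw [hSmaxval]; linarith
  -- the per-trial events
  set A : Set (Ω × ℝ) := {z | z.2 < cmin z.1} with hA
  set SM : Set (Ω × ℝ) := {z | z.2 < cmax z.1} with hSM
  set B : Set (Ω × ℝ) := SMᶜ with hB
  have hAm : MeasurableSet A := RS_meas_S cmin
  have hSMm : MeasurableSet SM := RS_meas_S cmax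
  have hBm : MeasurableSet B := hSMm.compl
  have hνA : ν A = ENNReal.ofReal Smin * (Fintype.card Ω : ℝ≥0∞)⁻¹ :=
    RS_nu_S cmin (fun x => le_min (hp0 x) (hq0 x))
      (fun x => min_le_of_left_le (hple x))
  have hνSM : ν SM = ENNReal.ofReal Smax * (Fintype.card Ω : ℝ≥0∞)⁻¹ :=
    RS_nu_S cmax (fun x => le_max_of_le_left (hp0 x))
      (fun x => max_le (hple x) (hqle x))
  have hνB : ν B = 1 - ν SM := by
    rw [hB, measure_compl hSMm (measure_ne_top _ _), measure_univ]
  have h1B : 1 - ν B = ν SM := by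
    rw [hνB, ENNReal.sub_sub_cancel ENNReal.one_ne_top prob_le_one]
  have hμZ : ∀ j, 1 ≤ j → ∀ C : Set (Ω × ℝ), MeasurableSet C → μ (Z j ⁻¹' C) = ν C := by
    intro j hj C hC
    rw [← Measure.map_apply (hZmeas j) hC, hdist j hj, hν]
  -- membership characterizations
  have hAiff : ∀ z : Ω × ℝ, z ∈ A ↔ (z.2 < p z.1 ∧ z.2 < q z.1) := by
    intro z; simp only [hA, Set.mem_setOf_eq, hcmin, lt_min_iff]
  have hBiff : ∀ z : Ω × ℝ, z ∈ B ↔ (¬ z.2 < p z.1 ∧ ¬ z.2 < q z.1) := by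
    intro z
    simp only [hB, hSM, Set.mem_compl_iff, Set.mem_setOf_eq, hcmax, lt_max_iff]
    tauto
  -- the success events
  set E : ℕ → Set α := fun k => (⋂ j ∈ Finset.Icc 1 k, Z j ⁻¹' B) ∩ Z (k+1) ⁻¹' A with hE
  have hEmem : ∀ k a, a ∈ E k ↔ ((∀ j, 1 ≤ j → j ≤ k → Z j a ∈ B) ∧ Z (k+1) a ∈ A) := by
    intro k a
    simp only [hE, Set.mem_inter_iff, Set.mem_iInter, Finset.mem_Icc, Set.mem_preimage,
      and_imp]
  have hEiff : ∀ k a, a ∈ E k ↔ (hitIdx p Z a = k+1 ∧ hitIdx q Z a = k+1) := by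
    intro k a
    rw [RS_hit_succ, RS_hit_succ, hEmem]
    constructor
    · rintro ⟨hBj, hAk⟩
      rw [hAiff] at hAk
      exact ⟨⟨hAk.1, fun j hj hjk => ((hBiff _).mp (hBj j hj hjk)).1⟩,
             ⟨hAk.2, fun j hj hjk => ((hBiff _).mp (hBj j hj hjk)).2⟩⟩
    · rintro ⟨⟨hp', hpj⟩, ⟨hq', hqj⟩⟩
      exact ⟨fun j hj hjk => (hBiff _).mpr ⟨hpj j hj hjk, hqj j hj hjk⟩,
             (hAiff _).mpr ⟨hp', hq'⟩⟩
  set N : Set α := {a | hitIdx p Z a = 0 ∧ hitIdx q Z a = 0} with hN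
  have hdecomp : {a | hitIdx p Z a = hitIdx q Z a} = N ∪ ⋃ k, E k := by
    ext a
    simp only [Set.mem_setOf_eq, Set.mem_union, Set.mem_iUnion, hN, Set.mem_setOf_eq]
    constructor
    · intro h
      rcases Nat.eq_zero_or_pos (hitIdx p Z a) with h0 | hpos
      · left; exact ⟨h0, by omega⟩
      · right
        obtain ⟨k, hk⟩ : ∃ k, hitIdx p Z a = k + 1 := ⟨hitIdx p Z a - 1, by omega⟩
        exact ⟨k, (hEiff k a).mpr ⟨hk, by omega⟩⟩
    · rintro (⟨h1, h2⟩ | ⟨k, hk⟩)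
      · rw [h1, h2]
      · rw [((hEiff k a).mp hk).1, ((hEiff k a).mp hk).2]
  -- the failure event is null
  have hNnull : μ N = 0 := by
    set Bp : Set (Ω × ℝ) := {z : Ω × ℝ | z.2 < p z.1}ᶜ with hBp
    have hBpm : MeasurableSet Bp := (RS_meas_S p).compl
    have hνBp : ν Bp = 1 - (Fintype.card Ω : ℝ≥0∞)⁻¹ := by
      rw [hBp, measure_compl (RS_meas_S p) (measure_ne_top _ _), measure_univ, hν,
        RS_nu_S p hp0 hple, hp1, ENNReal.ofReal_one, one_mul]
    have hlt : ν Bp < 1 := by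
      rw [hνBp]
      refine ENNReal.sub_lt_self ENNReal.one_ne_top one_ne_zero ?_
      simp [Fintype.card_ne_zero]
    have hbound : ∀ m : ℕ, μ N ≤ (ν Bp) ^ m := by
      intro m
      have hsub : N ⊆ ⋂ j ∈ Finset.Icc 1 m, Z j ⁻¹' Bp := by
        intro a ha
        simp only [Set.mem_iInter, Finset.mem_Icc, Set.mem_preimage, and_imp]
        intro j hj _
        have := (RS_hit_zero p Z a).mp ha.1 j hj
        simpa [hBp] using this
      calc μ N ≤ μ (⋂ j ∈ Finset.Icc 1 m, Z j ⁻¹' Bp) := measure_mono hsub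
        _ = ∏ j ∈ Finset.Icc 1 m, μ (Z j ⁻¹' Bp) := hindep _ _ (fun _ => hBpm)
        _ = ∏ j ∈ Finset.Icc 1 m, ν Bp := Finset.prod_congr rfl
              (fun j hj => hμZ j (Finset.mem_Icc.mp hj).1 Bp hBpm)
        _ = (ν Bp) ^ m := by rw [Finset.prod_const, Nat.card_Icc]; norm_num
    have htend := ENNReal.tendsto_pow_atTop_nhds_zero_of_lt_one hlt
    exact le_antisymm (ge_of_tendsto' htend hbound) zero_le
  -- disjointness and measurability
  have hdisj : Pairwise (Function.onFun Disjoint E) := by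
    intro k l hkl
    rw [Function.onFun, Set.disjoint_left]
    intro a hak hal
    have h1 := ((hEiff k a).mp hak).1
    have h2 := ((hEiff l a).mp hal).1
    omega
  have hEm : ∀ k, MeasurableSet (E k) := fun k =>
    (MeasurableSet.biInter (Finset.countable_toSet _) (fun j _ => (hZmeas j) hBm)).inter
      ((hZmeas _) hAm)
  -- measure of each success event
  have hμE : ∀ k, μ (E k) = ν A * ν B ^ k := by
    intro k
    have hiic : (⋂ j ∈ Finset.Icc 1 k, Z j ⁻¹' (if j = k+1 then A else B))
        = ⋂ j ∈ Finset.Icc 1 k, Z j ⁻¹' B :=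
      Set.iInter₂_congr fun j hj => by
        rw [if_neg (by rw [Finset.mem_Icc] at hj; omega)]
    have hCk : E k = ⋂ j ∈ Finset.Icc 1 (k+1), Z j ⁻¹' (if j = k+1 then A else B) := by
      rw [← Finset.insert_Icc_right_eq_Icc_add_one (by omega : 1 ≤ k+1), Finset.set_biInter_insert,
        if_pos rfl, hiic, Set.inter_comm]
    rw [hCk, hindep _ _ (fun i => by split <;> [exact hAm; exact hBm]),
      ← Finset.insert_Icc_right_eq_Icc_add_one (by omega : 1 ≤ k+1),
      Finset.prod_insert (by simp [Finset.mem_Icc]),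
      if_pos rfl, hμZ (k+1) (by omega) A hAm]
    congr 1
    have : ∀ j ∈ Finset.Icc 1 k, μ (Z j ⁻¹' (if j = k+1 then A else B)) = ν B := by
      intro j hj
      rw [Finset.mem_Icc] at hj
      rw [if_neg (by omega), hμZ j hj.1 B hBm]
    rw [Finset.prod_congr rfl this, Finset.prod_const, Nat.card_Icc]
    norm_num
  -- put everything together
  have hunion : μ {a | hitIdx p Z a = hitIdx q Z a} = μ (⋃ k, E k) := by
    rw [hdecomp]
    refine le_antisymm ?_ (measure_mono Set.subset_union_right)
    calc μ (N ∪ ⋃ k, E k) ≤ μ N + μ (⋃ k, E k) := measure_union_le _ _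
      _ = μ (⋃ k, E k) := by rw [hNnull, zero_add]
  rw [hunion, measure_iUnion hdisj hEm]
  simp only [hμE]
  rw [ENNReal.tsum_mul_left, ENNReal.tsum_geometric, h1B, hνA, hνSM]
  have hn0 : (Fintype.card Ω : ℝ≥0∞) ≠ 0 := by
    simp [Fintype.card_ne_zero]
  have hnt : (Fintype.card Ω : ℝ≥0∞) ≠ ⊤ := ENNReal.natCast_ne_top _
  have hmax0 : ENNReal.ofReal Smax ≠ 0 := by
    simp only [ne_eq, ENNReal.ofReal_eq_zero, not_le]
    exact hSmaxpos
  have hmaxt : ENNReal.ofReal Smax ≠ ⊤ := ENNReal.ofReal_ne_top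
  rw [ENNReal.mul_inv (Or.inl hmax0) (Or.inl hmaxt), inv_inv]
  rw [show ENNReal.ofReal Smin * (Fintype.card Ω : ℝ≥0∞)⁻¹
        * ((ENNReal.ofReal Smax)⁻¹ * (Fintype.card Ω : ℝ≥0∞))
      = ENNReal.ofReal Smin * (ENNReal.ofReal Smax)⁻¹
        * ((Fintype.card Ω : ℝ≥0∞)⁻¹ * (Fintype.card Ω : ℝ≥0∞)) from by ring]
  rw [ENNReal.inv_mul_cancel hn0 hnt, mul_one, ← div_eq_mul_inv,
    ← ENNReal.ofReal_div_of_pos hSmaxpos]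
  rw [hSminval, hSmaxval]
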